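/- Let T be a tree on V and F a set of non-tree edges of a graph G. If in the connectivity-domination graph Ĝ (vertex set F ∪ V, edges I ∪ D as below) the induced subgraph Ĝ[F] is connected and every v ∈ V has a neighbor in F, then T_F = ∪_{f∈F} T_f is a tree that dominates V in G, and hence T_F ∪ F is a 2-edge-connected subgraph of G whose vertex set dominates V. -/
import Mathlib

open SimpleGraph
variable {V : Type*}
noncomputable def treeWalk (T : SimpleGraph V) (hT : T.IsTree) (u v : V) : T.Walk u v :=
  (hT.existsUnique_path u v).choose
noncomputable def pathSupport (T : SimpleGraph V) (hT : T.IsTree) (f : V × V) : Set V :=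
  {v | v ∈ (treeWalk T hT f.1 f.2).support}
noncomputable def pathEdges (T : SimpleGraph V) (hT : T.IsTree) (f : V × V) : Set (Sym2 V) :=
  {e | e ∈ (treeWalk T hT f.1 f.2).edges}
noncomputable def unionPaths (T : SimpleGraph V) (hT : T.IsTree) (F : Set (V × V)) : SimpleGraph V :=
  SimpleGraph.fromEdgeSet (⋃ f ∈ F, pathEdges T hT f)
def pairGraph (F : Set (V × V)) : SimpleGraph V :=
  SimpleGraph.fromEdgeSet {e | ∃ f ∈ F, e = s(f.1, f.2)}
def ConnOn (H : SimpleGraph V) : Prop :=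
  H.support.Nonempty ∧ ∀ u ∈ H.support, ∀ v ∈ H.support, H.Reachable u v
def TwoEdgeConnected (H : SimpleGraph V) : Prop :=
  H.support.Nontrivial ∧ (∀ u ∈ H.support, ∀ v ∈ H.support, H.Reachable u v) ∧
    ∀ e ∈ H.edgeSet, ∀ u ∈ H.support, ∀ v ∈ H.support, (H.deleteEdges {e}).Reachable u v

/-- The connectivity-domination graph `Ĝ` on `F ⊕ V`: two elements `f, g ∈ F` are
adjacent iff the tree paths `T_f, T_g` share a vertex, and `f ∈ F` is adjacent to
`v : V` iff `v` lies on `T_f` or is a `G`-neighbor of a vertex of `T_f`. -/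
noncomputable def conDomGraph (G T : SimpleGraph V) (hT : T.IsTree) (F : Set (V × V)) :
    SimpleGraph ((V × V) ⊕ V) :=
  SimpleGraph.fromRel (fun a b =>
    match a, b with
    | Sum.inl f, Sum.inl g => f ∈ F ∧ g ∈ F ∧
        (pathSupport T hT f ∩ pathSupport T hT g).Nonempty
    | Sum.inl f, Sum.inr v => f ∈ F ∧
        (v ∈ pathSupport T hT f ∨ ∃ w ∈ pathSupport T hT f, G.Adj v w)
    | _, _ => False)

section Helpers

variable {V : Type*}

lemma treeWalk_isPath (T : SimpleGraph V) (hT : T.IsTree) (u v : V) :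
    (treeWalk T hT u v).IsPath := (hT.existsUnique_path u v).choose_spec.1

lemma unionPaths_le_T (T : SimpleGraph V) (hT : T.IsTree) (F : Set (V × V)) :
    unionPaths T hT F ≤ T := by
  intro a b hab
  rw [unionPaths, SimpleGraph.fromEdgeSet_adj] at hab
  obtain ⟨h1, -⟩ := hab
  rw [Set.mem_iUnion₂] at h1
  obtain ⟨f, hf, he⟩ := h1
  exact (treeWalk T hT f.1 f.2).adj_of_mem_edges he

lemma exists_edge_of_mem_support_cons {K : SimpleGraph V} {y z : V} (q : K.Walk y z) :
    ∀ {x : V} (h : K.Adj x y) {v : V},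
      v ∈ (q.cons h).support → ∃ w, s(v, w) ∈ (q.cons h).edges := by
  induction q with
  | nil =>
    rename_i y'
    intro x h v hv
    simp only [SimpleGraph.Walk.support_cons, SimpleGraph.Walk.support_nil,
      List.mem_cons, List.not_mem_nil, or_false] at hv
    rcases hv with rfl | rfl
    · exact ⟨y', by simp⟩
    · exact ⟨x, by simp [Sym2.eq_swap]⟩
  | cons h' q' ih =>
    rename_i c _ _
    intro x h v hv
    rw [SimpleGraph.Walk.support_cons, List.mem_cons] at hv
    rcases hv with rfl | hv
    · exact ⟨c, by simp⟩
    · obtain ⟨w, hw⟩ := ih h' hv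
      exact ⟨w, by rw [SimpleGraph.Walk.edges_cons]; exact List.mem_cons_of_mem _ hw⟩

lemma exists_edge_of_mem_support {K : SimpleGraph V} {x y : V} (q : K.Walk x y) (hxy : x ≠ y)
    {v : V} (hv : v ∈ q.support) : ∃ w, s(v, w) ∈ q.edges := by
  cases q with
  | nil => exact absurd rfl hxy
  | cons h p => exact exists_edge_of_mem_support_cons p h hv

lemma mem_support_unionPaths {T : SimpleGraph V} {hT : T.IsTree} {F : Set (V × V)}
    {f : V × V} (hf : f ∈ F) (hne : f.1 ≠ f.2) {v : V} (hv : v ∈ pathSupport T hT f) :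
    v ∈ (unionPaths T hT F).support := by
  obtain ⟨w, hw⟩ := exists_edge_of_mem_support (treeWalk T hT f.1 f.2) hne hv
  rw [SimpleGraph.mem_support]
  refine ⟨w, ?_⟩
  rw [unionPaths, SimpleGraph.fromEdgeSet_adj]
  exact ⟨Set.mem_iUnion₂.mpr ⟨f, hf, hw⟩, ((treeWalk T hT f.1 f.2).adj_of_mem_edges hw).ne⟩

lemma support_unionPaths {T : SimpleGraph V} {hT : T.IsTree} {F : Set (V × V)}
    {v : V} (hv : v ∈ (unionPaths T hT F).support) :
    ∃ f ∈ F, v ∈ pathSupport T hT f := by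
  rw [SimpleGraph.mem_support] at hv
  obtain ⟨w, hw⟩ := hv
  rw [unionPaths, SimpleGraph.fromEdgeSet_adj] at hw
  obtain ⟨h1, -⟩ := hw
  rw [Set.mem_iUnion₂] at h1
  obtain ⟨f, hf, he⟩ := h1
  exact ⟨f, hf, (treeWalk T hT f.1 f.2).fst_mem_support_of_mem_edges he⟩

lemma pathEdges_mem_unionPaths_edgeSet {T : SimpleGraph V} {hT : T.IsTree} {F : Set (V × V)}
    {f : V × V} (hf : f ∈ F) {e : Sym2 V} (he : e ∈ pathEdges T hT f) :
    e ∈ (unionPaths T hT F).edgeSet := by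
  rw [unionPaths, SimpleGraph.edgeSet_fromEdgeSet]
  refine ⟨Set.mem_iUnion₂.mpr ⟨f, hf, he⟩, ?_⟩
  exact T.not_isDiag_of_mem_edgeSet ((treeWalk T hT f.1 f.2).edges_subset_edgeSet he)

lemma reachable_of_mem_pathSupport {T : SimpleGraph V} {hT : T.IsTree} {F : Set (V × V)}
    {f : V × V} (hf : f ∈ F) {v : V} (hv : v ∈ pathSupport T hT f) :
    (unionPaths T hT F).Reachable f.1 v := by
  classical
  refine ⟨((treeWalk T hT f.1 f.2).takeUntil v hv).transfer _ fun e he => ?_⟩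
  exact pathEdges_mem_unionPaths_edgeSet hf ((treeWalk T hT f.1 f.2).edges_takeUntil_subset hv he)

lemma reachable_pathSupport {T : SimpleGraph V} {hT : T.IsTree} {F : Set (V × V)}
    {f : V × V} (hf : f ∈ F) {u v : V} (hu : u ∈ pathSupport T hT f)
    (hv : v ∈ pathSupport T hT f) : (unionPaths T hT F).Reachable u v :=
  (reachable_of_mem_pathSupport hf hu).symm.trans (reachable_of_mem_pathSupport hf hv)

lemma conDom_adj_inl {G T : SimpleGraph V} {hT : T.IsTree} {F : Set (V × V)} {f g : V × V}
    (h : (conDomGraph G T hT F).Adj (Sum.inl f) (Sum.inl g)) :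
    (pathSupport T hT f ∩ pathSupport T hT g).Nonempty := by
  rw [conDomGraph, SimpleGraph.fromRel_adj] at h
  rcases h.2 with h' | h'
  · exact h'.2.2
  · obtain ⟨x, hx1, hx2⟩ := h'.2.2
    exact ⟨x, hx2, hx1⟩

lemma key_reach {G T : SimpleGraph V} {hT : T.IsTree} {F : Set (V × V)} :
    ∀ {a b : ↥((Sum.inl '' F : Set ((V × V) ⊕ V)))}
      (p : ((conDomGraph G T hT F).induce (Sum.inl '' F)).Walk a b)
      {f g : V × V}, a.1 = Sum.inl f → b.1 = Sum.inl g → f ∈ F →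
      ∀ u ∈ pathSupport T hT f, ∀ v ∈ pathSupport T hT g,
        (unionPaths T hT F).Reachable u v := by
  intro a b p
  induction p with
  | nil =>
    intro f g ha hb hf u hu v hv
    rw [ha] at hb
    cases Sum.inl.inj hb
    exact reachable_pathSupport hf hu hv
  | cons h q ih =>
    rename_i s c t
    intro f g ha hb hf u hu v hv
    obtain ⟨f', hf', hc⟩ := c.2
    have h2 : (conDomGraph G T hT F).Adj s.1 c.1 := h
    rw [ha, ← hc] at h2
    obtain ⟨x, hxf, hxf'⟩ := conDom_adj_inl h2
    exact (reachable_pathSupport hf hu hxf).trans (ih hc.symm hb hf' x hxf' v hv)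

lemma reachable_deleteEdges {H : SimpleGraph V} {e : Sym2 V}
    (he : ∀ a b : V, s(a, b) = e → (H.deleteEdges {e}).Reachable a b) :
    ∀ {u v : V}, H.Reachable u v → (H.deleteEdges {e}).Reachable u v := by
  intro u v hr
  obtain ⟨p⟩ := hr
  induction p with
  | nil => exact SimpleGraph.Reachable.refl _
  | cons hadj q ih =>
    rename_i x c y
    by_cases hc : s(x, c) = e
    · exact (he x c hc).trans ih
    · exact (SimpleGraph.Adj.reachable
        (SimpleGraph.deleteEdges_adj.mpr ⟨hadj, by simpa using hc⟩)).trans ih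

lemma walk_split {K : SimpleGraph V} {e : Sym2 V} :
    ∀ {x y : V} (p : K.Walk x y), p.edges.Nodup → e ∈ p.edges →
      ∀ a b : V, s(a, b) = e →
        ((K.deleteEdges {e}).Reachable x a ∧ (K.deleteEdges {e}).Reachable b y) ∨
        ((K.deleteEdges {e}).Reachable x b ∧ (K.deleteEdges {e}).Reachable a y) := by
  intro x y p
  induction p with
  | nil => intro _ he; simp at he
  | cons hadj q ih =>
    rename_i x' c y'
    intro hnd he a b hab
    rw [SimpleGraph.Walk.edges_cons] at he hnd
    rw [List.nodup_cons] at hnd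
    rcases List.mem_cons.mp he with he1 | he2
    · have hq : ∀ e' ∈ q.edges, e' ∉ ({e} : Set (Sym2 V)) := by
        intro e' he' hmem
        rw [Set.mem_singleton_iff] at hmem
        subst hmem
        exact hnd.1 (he1 ▸ he')
      have hcy : (K.deleteEdges {e}).Reachable c y' := ⟨q.toDeleteEdges _ hq⟩
      have heq : s(a, b) = s(x', c) := hab.trans he1
      rw [Sym2.eq_iff] at heq
      rcases heq with ⟨rfl, rfl⟩ | ⟨rfl, rfl⟩
      · exact Or.inl ⟨SimpleGraph.Reachable.refl _, hcy⟩
      · exact Or.inr ⟨SimpleGraph.Reachable.refl _, hcy⟩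
    · have hne : s(x', c) ≠ e := fun hh => hnd.1 (hh.symm ▸ he2)
      have hxc : (K.deleteEdges {e}).Reachable x' c :=
        SimpleGraph.Adj.reachable (SimpleGraph.deleteEdges_adj.mpr ⟨hadj, by simpa using hne⟩)
      rcases ih hnd.2 he2 a b hab with ⟨h1, h2⟩ | ⟨h1, h2⟩
      · exact Or.inl ⟨hxc.trans h1, h2⟩
      · exact Or.inr ⟨hxc.trans h1, h2⟩

end Helpers

/-- Converse direction of the reduction: if in the connectivity-domination graph `Ĝ[F]`
is connected and every `v ∈ V` has a neighbor in `F`, then `T_F` is a tree dominating `V`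
in `G`, and hence `T_F ∪ F` is a 2-edge-connected subgraph of `G` whose vertex set
dominates `V`. -/
theorem stmt19 (G T : SimpleGraph V) (hle : T ≤ G) (hT : T.IsTree)
    (F : Set (V × V)) (hF : ∀ f ∈ F, G.Adj f.1 f.2 ∧ ¬ T.Adj f.1 f.2)
    (hconn : ((conDomGraph G T hT F).induce (Sum.inl '' F)).Connected)
    (hdom : ∀ v : V, ∃ f ∈ F, (conDomGraph G T hT F).Adj (Sum.inl f) (Sum.inr v)) :
    ConnOn (unionPaths T hT F) ∧
      (∀ v : V, v ∈ (unionPaths T hT F).support ∨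
        ∃ u ∈ (unionPaths T hT F).support, G.Adj v u) ∧
      TwoEdgeConnected (unionPaths T hT F ⊔ pairGraph F) ∧
      (unionPaths T hT F ⊔ pairGraph F) ≤ G ∧
      ∀ v : V, v ∈ (unionPaths T hT F ⊔ pairGraph F).support ∨
        ∃ u ∈ (unionPaths T hT F ⊔ pairGraph F).support, G.Adj v u := by
  classical
  have hne : ∀ f ∈ F, f.1 ≠ f.2 := fun f hf => (hF f hf).1.ne
  have hUT : unionPaths T hT F ≤ T := unionPaths_le_T T hT F
  obtain ⟨⟨a0, ha0⟩⟩ := hconn.nonempty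
  obtain ⟨f0, hf0, -⟩ := ha0
  have hstart : ∀ f ∈ F, f.1 ∈ (unionPaths T hT F).support := fun f hf =>
    mem_support_unionPaths hf (hne f hf) ((treeWalk T hT f.1 f.2).start_mem_support)
  have hend : ∀ f ∈ F, f.2 ∈ (unionPaths T hT F).support := fun f hf =>
    mem_support_unionPaths hf (hne f hf) ((treeWalk T hT f.1 f.2).end_mem_support)
  have hreachU : ∀ u ∈ (unionPaths T hT F).support, ∀ v ∈ (unionPaths T hT F).support,
      (unionPaths T hT F).Reachable u v := by
    intro u hu v hv
    obtain ⟨f, hf, huf⟩ := support_unionPaths hu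
    obtain ⟨g, hg, hvg⟩ := support_unionPaths hv
    obtain ⟨p⟩ := hconn.preconnected ⟨Sum.inl f, ⟨f, hf, rfl⟩⟩ ⟨Sum.inl g, ⟨g, hg, rfl⟩⟩
    exact key_reach p rfl rfl hf u huf v hvg
  have hconnOn : ConnOn (unionPaths T hT F) := ⟨⟨f0.1, hstart f0 hf0⟩, hreachU⟩
  have hdomU : ∀ v : V, v ∈ (unionPaths T hT F).support ∨
      ∃ u ∈ (unionPaths T hT F).support, G.Adj v u := by
    intro v
    obtain ⟨f, hf, hadj⟩ := hdom v
    rw [conDomGraph, SimpleGraph.fromRel_adj] at hadj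
    rcases hadj.2 with h' | h'
    · rcases h'.2 with hvin | ⟨w, hw, hGvw⟩
      · exact Or.inl (mem_support_unionPaths hf (hne f hf) hvin)
      · exact Or.inr ⟨w, mem_support_unionPaths hf (hne f hf) hw, hGvw⟩
    · exact h'.elim
  have hPsub : ∀ v ∈ (pairGraph F).support, v ∈ (unionPaths T hT F).support := by
    intro v hv
    rw [SimpleGraph.mem_support] at hv
    obtain ⟨w, hw⟩ := hv
    rw [pairGraph, SimpleGraph.fromEdgeSet_adj] at hw
    obtain ⟨⟨f, hf, heq⟩, -⟩ := hw
    rw [Sym2.eq_iff] at heq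
    rcases heq with ⟨h1, -⟩ | ⟨h1, -⟩
    · exact h1 ▸ hstart f hf
    · exact h1 ▸ hend f hf
  have hsupH : (unionPaths T hT F ⊔ pairGraph F).support = (unionPaths T hT F).support := by
    ext v
    constructor
    · intro hv
      rw [SimpleGraph.mem_support] at hv
      obtain ⟨w, hw⟩ := hv
      rcases (SimpleGraph.sup_adj _ _ _ _).mp hw with hw' | hw'
      · exact (SimpleGraph.mem_support _).mpr ⟨w, hw'⟩
      · exact hPsub v ((SimpleGraph.mem_support _).mpr ⟨w, hw'⟩)
    · intro hv
      rw [SimpleGraph.mem_support] at hv ⊢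
      obtain ⟨w, hw⟩ := hv
      exact ⟨w, (SimpleGraph.sup_adj _ _ _ _).mpr (Or.inl hw)⟩
  have hPG : pairGraph F ≤ G := by
    intro a b hab
    rw [pairGraph, SimpleGraph.fromEdgeSet_adj] at hab
    obtain ⟨⟨f, hf, heq⟩, -⟩ := hab
    rw [Sym2.eq_iff] at heq
    rcases heq with ⟨h1, h2⟩ | ⟨h1, h2⟩ <;> subst h1 <;> subst h2
    · exact (hF f hf).1
    · exact (hF f hf).1.symm
  have hHG : unionPaths T hT F ⊔ pairGraph F ≤ G := sup_le (le_trans hUT hle) hPG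
  have hchordT : ∀ f ∈ F, s(f.1, f.2) ∉ T.edgeSet := by
    intro f hf h
    exact (hF f hf).2 (T.mem_edgeSet.mp h)
  have hreachH : ∀ u ∈ (unionPaths T hT F ⊔ pairGraph F).support,
      ∀ v ∈ (unionPaths T hT F ⊔ pairGraph F).support,
      (unionPaths T hT F ⊔ pairGraph F).Reachable u v := by
    intro u hu v hv
    rw [hsupH] at hu hv
    exact (hreachU u hu v hv).mono le_sup_left
  have hnontriv : (unionPaths T hT F ⊔ pairGraph F).support.Nontrivial := by
    rw [hsupH]
    exact ⟨f0.1, hstart f0 hf0, f0.2, hend f0 hf0, hne f0 hf0⟩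
  have hdel : ∀ e ∈ (unionPaths T hT F ⊔ pairGraph F).edgeSet,
      ∀ u ∈ (unionPaths T hT F ⊔ pairGraph F).support,
      ∀ v ∈ (unionPaths T hT F ⊔ pairGraph F).support,
      ((unionPaths T hT F ⊔ pairGraph F).deleteEdges {e}).Reachable u v := by
    intro e he u hu v hv
    rw [hsupH] at hu hv
    have hruv : (unionPaths T hT F ⊔ pairGraph F).Reachable u v :=
      (hreachU u hu v hv).mono le_sup_left
    rw [SimpleGraph.edgeSet_sup] at he
    rcases he with heU | heP
    · rw [unionPaths, SimpleGraph.edgeSet_fromEdgeSet] at heU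
      obtain ⟨h1, -⟩ := heU
      rw [Set.mem_iUnion₂] at h1
      obtain ⟨f, hf, hef⟩ := h1
      have hchord : ((unionPaths T hT F ⊔ pairGraph F).deleteEdges {e}).Adj f.1 f.2 := by
        rw [SimpleGraph.deleteEdges_adj]
        constructor
        · exact (SimpleGraph.sup_adj _ _ _ _).mpr (Or.inr
            ((SimpleGraph.fromEdgeSet_adj _).mpr ⟨⟨f, hf, rfl⟩, hne f hf⟩))
        · intro hmem
          rw [Set.mem_singleton_iff] at hmem
          have hT' : e ∈ T.edgeSet := (treeWalk T hT f.1 f.2).edges_subset_edgeSet hef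
          exact hchordT f hf (hmem.symm ▸ hT')
      have hHedges : ∀ e' ∈ (treeWalk T hT f.1 f.2).edges,
          e' ∈ (unionPaths T hT F ⊔ pairGraph F).edgeSet := by
        intro e' he'
        rw [SimpleGraph.edgeSet_sup]
        exact Or.inl (pathEdges_mem_unionPaths_edgeSet hf he')
      have hpe : e ∈ ((treeWalk T hT f.1 f.2).transfer _ hHedges).edges := by
        rw [SimpleGraph.Walk.edges_transfer]; exact hef
      have hpnd : ((treeWalk T hT f.1 f.2).transfer _ hHedges).edges.Nodup := by
        rw [SimpleGraph.Walk.edges_transfer]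
        exact (treeWalk_isPath T hT f.1 f.2).isTrail.edges_nodup
      have hab : ∀ a b : V, s(a, b) = e →
          ((unionPaths T hT F ⊔ pairGraph F).deleteEdges {e}).Reachable a b := by
        intro a b habe
        rcases walk_split _ hpnd hpe a b habe with ⟨h1, h2⟩ | ⟨h1, h2⟩
        · exact h1.symm.trans (hchord.reachable.trans h2.symm)
        · exact h2.trans (hchord.reachable.symm.trans h1)
      exact reachable_deleteEdges hab hruv
    · rw [pairGraph, SimpleGraph.edgeSet_fromEdgeSet] at heP
      obtain ⟨⟨f, hf, rfl⟩, -⟩ := heP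
      have hUle : unionPaths T hT F ≤
          (unionPaths T hT F ⊔ pairGraph F).deleteEdges {s(f.1, f.2)} := by
        intro a b hab
        rw [SimpleGraph.deleteEdges_adj]
        refine ⟨(SimpleGraph.sup_adj _ _ _ _).mpr (Or.inl hab), ?_⟩
        intro hmem
        rw [Set.mem_singleton_iff] at hmem
        exact hchordT f hf (hmem ▸ (T.mem_edgeSet.mpr (hUT hab)))
      exact (hreachU u hu v hv).mono hUle
  refine ⟨hconnOn, hdomU, ⟨hnontriv, hreachH, hdel⟩, hHG, ?_⟩
  intro v
  rcases hdomU v with hv | ⟨u, hu, hGvu⟩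
  · exact Or.inl (hsupH.symm ▸ hv)
  · exact Or.inr ⟨u, hsupH.symm ▸ hu, hGvu⟩
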